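/- Let $(X, d)$ be a geodesic metric space, suppose $X = \bigcup_{i=1}^{N+1} V_i$ where each geodesic triangle with all three vertices in a single $V_i$ is $\delta$-thin, and suppose additionally: (i) $V_{N+1}$ has finite diameter $M$ in the metric $d$; (ii) for each $i \le N$ there is an open set $U_i \supset V_i$ such that any geodesic from a point of $V_i$ to a point outside $U_i$ meets $U_i \cap V_{N+1}$, and geodesic triangles with vertices in $U_i$ are $\delta$-thin. Then every geodesic triangle in $X$ is $(3\delta + 2M)$-thin, and hence $(X,d)$ is Gromov hyperbolic. -/

import Mathlib

open Metric Set

/-- `γ` is a (unit speed) geodesic from `x` to `y`, parametrized on `[0, dist x y]`. -/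
def IsGeodesic {X : Type*} [MetricSpace X] (x y : X) (γ : ℝ → X) : Prop :=
  γ 0 = x ∧ γ (dist x y) = y ∧
    ∀ s ∈ Set.Icc (0 : ℝ) (dist x y), ∀ t ∈ Set.Icc (0 : ℝ) (dist x y),
      dist (γ s) (γ t) = |s - t|

/-- The image of a geodesic segment from `x` to `y`. -/
def geodImg {X : Type*} [MetricSpace X] (x y : X) (γ : ℝ → X) : Set X :=
  γ '' Set.Icc 0 (dist x y)

/-- Every geodesic triangle with vertices in `A` is `δ`-thin: each side lies in the
`δ`-neighbourhood of the union of the other two sides. -/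
def TrianglesThinOn {X : Type*} [MetricSpace X] (A : Set X) (δ : ℝ) : Prop :=
  ∀ x ∈ A, ∀ y ∈ A, ∀ z ∈ A, ∀ γ₁ γ₂ γ₃ : ℝ → X,
    IsGeodesic x y γ₁ → IsGeodesic y z γ₂ → IsGeodesic x z γ₃ →
    (∀ p ∈ geodImg x y γ₁, infDist p (geodImg y z γ₂ ∪ geodImg x z γ₃) ≤ δ) ∧
    (∀ p ∈ geodImg y z γ₂, infDist p (geodImg x y γ₁ ∪ geodImg x z γ₃) ≤ δ) ∧
    (∀ p ∈ geodImg x z γ₃, infDist p (geodImg x y γ₁ ∪ geodImg y z γ₂) ≤ δ)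

/-- The Gromov product `(x|y)_o`. -/
noncomputable def gromovProd {X : Type*} [MetricSpace X] (o x y : X) : ℝ :=
  (dist x o + dist y o - dist x y) / 2

section AuxBasic

variable {X : Type*} [MetricSpace X]

private lemma le_add_eps {a b : ℝ} (h : ∀ ε > (0:ℝ), a ≤ b + ε) : a ≤ b := by
  by_contra hc
  push_neg at hc
  have := h ((a - b)/2) (by linarith)
  linarith

namespace IsGeodesic

variable {x y : X} {γ : ℝ → X}

lemma distLeft (h : IsGeodesic x y γ) {t : ℝ} (ht : t ∈ Icc 0 (dist x y)) :
    dist x (γ t) = t := by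
  have h0 : (0:ℝ) ∈ Icc 0 (dist x y) := ⟨le_refl _, dist_nonneg⟩
  have hh := h.2.2 0 h0 t ht
  rw [h.1] at hh
  rw [hh, zero_sub, abs_neg, abs_of_nonneg ht.1]

lemma distRight (h : IsGeodesic x y γ) {t : ℝ} (ht : t ∈ Icc 0 (dist x y)) :
    dist (γ t) y = dist x y - t := by
  have hD : dist x y ∈ Icc 0 (dist x y) := ⟨dist_nonneg, le_refl _⟩
  have hh := h.2.2 t ht (dist x y) hD
  rw [h.2.1] at hh
  rw [hh, abs_sub_comm, abs_of_nonneg (sub_nonneg.2 ht.2)]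

lemma init (h : IsGeodesic x y γ) {s : ℝ} (hs : s ∈ Icc 0 (dist x y)) :
    IsGeodesic x (γ s) γ := by
  have hd : dist x (γ s) = s := h.distLeft hs
  refine ⟨h.1, by rw [hd], ?_⟩
  intro a ha b hb
  rw [hd] at ha hb
  exact h.2.2 a ⟨ha.1, ha.2.trans hs.2⟩ b ⟨hb.1, hb.2.trans hs.2⟩

lemma initImg_subset (h : IsGeodesic x y γ) {s : ℝ} (hs : s ∈ Icc 0 (dist x y)) :
    geodImg x (γ s) γ ⊆ geodImg x y γ := by
  unfold geodImg
  apply image_mono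
  rw [h.distLeft hs]
  exact Icc_subset_Icc le_rfl hs.2

lemma rev (h : IsGeodesic x y γ) :
    IsGeodesic y x (fun t => γ (dist x y - t)) := by
  refine ⟨by simpa using h.2.1, ?_, ?_⟩
  · simp only [dist_comm y x, sub_self, h.1]
  · intro a ha b hb
    rw [dist_comm y x] at ha hb
    have ha' : dist x y - a ∈ Icc 0 (dist x y) := ⟨by linarith [ha.2], by linarith [ha.1]⟩
    have hb' : dist x y - b ∈ Icc 0 (dist x y) := ⟨by linarith [hb.2], by linarith [hb.1]⟩
    have := h.2.2 _ ha' _ hb'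
    simp only [this]
    rw [show dist x y - a - (dist x y - b) = -(a - b) by ring, abs_neg]

lemma revImg (h : IsGeodesic x y γ) :
    geodImg y x (fun t => γ (dist x y - t)) = geodImg x y γ := by
  unfold geodImg
  rw [dist_comm y x]
  ext p
  simp only [mem_image]
  constructor
  · rintro ⟨t, ht, rfl⟩
    exact ⟨dist x y - t, ⟨by linarith [ht.2], by linarith [ht.1]⟩, rfl⟩
  · rintro ⟨t, ht, rfl⟩
    refine ⟨dist x y - t, ⟨by linarith [ht.2], by linarith [ht.1]⟩, ?_⟩
    simp [sub_sub_cancel]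

lemma left_mem (h : IsGeodesic x y γ) : x ∈ geodImg x y γ :=
  ⟨0, ⟨le_rfl, dist_nonneg⟩, h.1⟩

lemma right_mem (h : IsGeodesic x y γ) : y ∈ geodImg x y γ :=
  ⟨dist x y, ⟨dist_nonneg, le_rfl⟩, h.2.1⟩

lemma img_nonempty (h : IsGeodesic x y γ) : (geodImg x y γ).Nonempty :=
  ⟨x, h.left_mem⟩

lemma short (h : IsGeodesic x y γ) {r : ℝ} (hxy : dist x y ≤ r) :
    ∀ p ∈ geodImg x y γ, dist p y ≤ r := by
  rintro p ⟨t, ht, rfl⟩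
  rw [h.distRight ht]
  linarith [ht.1]

end IsGeodesic

private lemma le_infDist' {s : Set X} {b : ℝ} {x : X} (hs : s.Nonempty)
    (h : ∀ y ∈ s, b ≤ dist x y) : b ≤ infDist x s := by
  by_contra hc
  push_neg at hc
  obtain ⟨y, hy, hd⟩ := (infDist_lt_iff hs).mp hc
  exact absurd (h y hy) (not_le.2 hd)

private lemma infDist_trans {p : X} {S T : Set X} {r r' : ℝ}
    (hS : S.Nonempty) (h : infDist p S ≤ r) (h' : ∀ q ∈ S, infDist q T ≤ r') :
    infDist p T ≤ r + r' := by
  refine le_add_eps fun ε hε => ?_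
  obtain ⟨q, hq, hdq⟩ := (infDist_lt_iff hS).mp
    (lt_of_le_of_lt h (by linarith : r < r + ε))
  calc infDist p T ≤ infDist q T + dist p q := infDist_le_infDist_add_dist
    _ ≤ r' + (r + ε) := add_le_add (h' q hq) hdq.le
    _ = r + r' + ε := by ring

private lemma infDist_union_trans {p : X} {S₁ S₂ T : Set X} {r r' : ℝ} (hr' : 0 ≤ r')
    (hS₂ : S₂.Nonempty) (h : infDist p (S₁ ∪ S₂) ≤ r)
    (h₁ : ∀ q ∈ S₁, infDist q T ≤ r') (h₂ : S₂ ⊆ T) :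
    infDist p T ≤ r + r' := by
  refine infDist_trans (hS₂.mono subset_union_right) h ?_
  rintro q (hq | hq)
  · exact h₁ q hq
  · rw [infDist_zero_of_mem (h₂ hq)]; exact hr'

end AuxBasic

section Glue

variable {X : Type*} [MetricSpace X] {δ Mdiam : ℝ} {N : ℕ}
  {V : Fin (N + 1) → Set X} {U : Fin N → Set X}

private lemma distVl (hM : 0 ≤ Mdiam)
    (hdiam : EMetric.diam (V (Fin.last N)) ≤ ENNReal.ofReal Mdiam)
    {w w' : X} (hw : w ∈ V (Fin.last N)) (hw' : w' ∈ V (Fin.last N)) :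
    dist w w' ≤ Mdiam := by
  have h1 : edist w w' ≤ ENNReal.ofReal Mdiam :=
    le_trans (EMetric.edist_le_diam_of_mem hw hw') hdiam
  rw [dist_edist]
  calc (edist w w').toReal ≤ (ENNReal.ofReal Mdiam).toReal :=
        ENNReal.toReal_mono (by simp) h1
    _ = Mdiam := ENNReal.toReal_ofReal hM

/-- The "R lemma": a geodesic `ρ` from `b ∈ V k` to a point `z` of the last piece stays
`(δ+2M)`-close to any geodesic from `b` to a point `w₄ ∈ U k ∩ V_last`. -/
private lemma lemR (hδ : 0 ≤ δ) (hM : 0 ≤ Mdiam)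
    (hGeo : ∀ a b : X, ∃ γ : ℝ → X, IsGeodesic a b γ)
    (hdiam : EMetric.diam (V (Fin.last N)) ≤ ENNReal.ofReal Mdiam)
    (hUV : ∀ i : Fin N, V i.castSucc ⊆ U i)
    (hUthin : ∀ i : Fin N, TrianglesThinOn (U i) δ)
    (hmeet : ∀ i : Fin N, ∀ x ∈ V i.castSucc, ∀ y ∉ U i, ∀ γ : ℝ → X,
      IsGeodesic x y γ → (geodImg x y γ ∩ (U i ∩ V (Fin.last N))).Nonempty)
    (k : Fin N) (b z w₄ : X) (ρ bγ : ℝ → X)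
    (hb : b ∈ V k.castSucc) (hz : z ∈ V (Fin.last N))
    (hw₄U : w₄ ∈ U k) (hw₄V : w₄ ∈ V (Fin.last N))
    (hρ : IsGeodesic b z ρ) (hbγ : IsGeodesic b w₄ bγ) :
    ∀ q ∈ geodImg b z ρ, infDist q (geodImg b w₄ bγ) ≤ δ + 2 * Mdiam := by
  by_cases hzU : z ∈ U k
  · obtain ⟨η, hη⟩ := hGeo z w₄
    have thin := (hUthin k b (hUV k hb) z hzU w₄ hw₄U ρ η bγ hρ hη hbγ).1
    intro q hq
    have hb1 : ∀ r ∈ geodImg z w₄ η, infDist r (geodImg b w₄ bγ) ≤ 2 * Mdiam := by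
      intro r hr
      have hr2 : dist r w₄ ≤ Mdiam := hη.short (distVl hM hdiam hz hw₄V) r hr
      exact le_trans (infDist_le_dist_of_mem hbγ.right_mem) (by linarith)
    have := infDist_union_trans (by linarith) hbγ.img_nonempty (thin q hq) hb1 subset_rfl
    linarith
  · obtain ⟨w₅, hw₅Img, hw₅U, hw₅V⟩ := hmeet k b hb z hzU ρ hρ
    obtain ⟨s₅, hs₅, rfl⟩ := hw₅Img
    have hds₅ : dist b (ρ s₅) = s₅ := hρ.distLeft hs₅
    rintro q ⟨t, ht, rfl⟩
    by_cases htb : t ≤ s₅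
    · obtain ⟨η, hη⟩ := hGeo (ρ s₅) w₄
      have hinit : IsGeodesic b (ρ s₅) ρ := hρ.init hs₅
      have thin := (hUthin k b (hUV k hb) (ρ s₅) hw₅U w₄ hw₄U ρ η bγ hinit hη hbγ).1
      have hqmem : ρ t ∈ geodImg b (ρ s₅) ρ :=
        mem_image_of_mem _ (by rw [hds₅]; exact ⟨ht.1, htb⟩)
      have hb1 : ∀ r ∈ geodImg (ρ s₅) w₄ η, infDist r (geodImg b w₄ bγ) ≤ 2 * Mdiam := by
        intro r hr
        have hr2 : dist r w₄ ≤ Mdiam := hη.short (distVl hM hdiam hw₅V hw₄V) r hr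
        exact le_trans (infDist_le_dist_of_mem hbγ.right_mem) (by linarith)
      have := infDist_union_trans (by linarith) hbγ.img_nonempty (thin _ hqmem) hb1 subset_rfl
      linarith
    · have h1 : dist (ρ t) z = dist b z - t := hρ.distRight ht
      have h2 : dist (ρ s₅) z = dist b z - s₅ := hρ.distRight hs₅
      have h3 : dist (ρ s₅) z ≤ Mdiam := distVl hM hdiam hw₅V hz
      have h4 : dist z w₄ ≤ Mdiam := distVl hM hdiam hz hw₄V
      have h5 : dist (ρ t) w₄ ≤ 2 * Mdiam := by
        have := dist_triangle (ρ t) z w₄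
        linarith
      exact le_trans (infDist_le_dist_of_mem hbγ.right_mem) (by linarith)

/-- Existence of a "base point" in `V_last` on a side emanating from `z`, unless the
whole triangle lies in one thin region or `z` is itself in the last piece. -/
private lemma zbase
    (hcover : (⋃ i, V i) = univ)
    (hUV : ∀ i : Fin N, V i.castSucc ⊆ U i)
    (hmeet : ∀ i : Fin N, ∀ x ∈ V i.castSucc, ∀ y ∉ U i, ∀ γ : ℝ → X,
      IsGeodesic x y γ → (geodImg x y γ ∩ (U i ∩ V (Fin.last N))).Nonempty)
    (z u v : X) (π' τ' : ℝ → X) (T : Set X)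
    (hπ' : IsGeodesic z u π') (hτ' : IsGeodesic z v τ')
    (hπT : geodImg z u π' ⊆ T) (hτT : geodImg z v τ' ⊆ T) :
    (∃ m : Fin N, z ∈ U m ∧ u ∈ U m ∧ v ∈ U m) ∨
    (z ∈ V (Fin.last N) ∨
      ∃ m : Fin N, z ∈ V m.castSucc ∧ ∃ w₄, (w₄ ∈ U m ∧ w₄ ∈ V (Fin.last N)) ∧
        ∃ bγ : ℝ → X, IsGeodesic z w₄ bγ ∧ geodImg z w₄ bγ ⊆ T) := by
  have hzc : z ∈ ⋃ i, V i := hcover ▸ mem_univ z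
  obtain ⟨j, hj⟩ := mem_iUnion.mp hzc
  rcases Fin.eq_castSucc_or_eq_last j with ⟨m, rfl⟩ | rfl
  · by_cases hum : u ∈ U m
    · by_cases hvm : v ∈ U m
      · exact Or.inl ⟨m, hUV m hj, hum, hvm⟩
      · refine Or.inr (Or.inr ⟨m, hj, ?_⟩)
        obtain ⟨w, hwImg, hwU, hwV⟩ := hmeet m z hj v hvm τ' hτ'
        obtain ⟨r, hr, rfl⟩ := hwImg
        exact ⟨τ' r, ⟨hwU, hwV⟩, τ', hτ'.init hr, (hτ'.initImg_subset hr).trans hτT⟩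
    · refine Or.inr (Or.inr ⟨m, hj, ?_⟩)
      obtain ⟨w, hwImg, hwU, hwV⟩ := hmeet m z hj u hum π' hπ'
      obtain ⟨r, hr, rfl⟩ := hwImg
      exact ⟨π' r, ⟨hwU, hwV⟩, π', hπ'.init hr, (hπ'.initImg_subset hr).trans hπT⟩
  · exact Or.inr (Or.inl hj)

/-- Any geodesic from a point `w₁` of the last piece to a vertex `z` (equipped with
base data from `zbase`) stays `(δ+2M)`-close to the target `T`. -/
private lemma eta (hδ : 0 ≤ δ) (hM : 0 ≤ Mdiam)
    (hGeo : ∀ a b : X, ∃ γ : ℝ → X, IsGeodesic a b γ)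
    (hdiam : EMetric.diam (V (Fin.last N)) ≤ ENNReal.ofReal Mdiam)
    (hUV : ∀ i : Fin N, V i.castSucc ⊆ U i)
    (hUthin : ∀ i : Fin N, TrianglesThinOn (U i) δ)
    (hmeet : ∀ i : Fin N, ∀ x ∈ V i.castSucc, ∀ y ∉ U i, ∀ γ : ℝ → X,
      IsGeodesic x y γ → (geodImg x y γ ∩ (U i ∩ V (Fin.last N))).Nonempty)
    (z w₁ : X) (η : ℝ → X) (T : Set X)
    (hw₁ : w₁ ∈ V (Fin.last N)) (hη : IsGeodesic w₁ z η) (hzT : z ∈ T)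
    (hZ : z ∈ V (Fin.last N) ∨
      ∃ m : Fin N, z ∈ V m.castSucc ∧ ∃ w₄, (w₄ ∈ U m ∧ w₄ ∈ V (Fin.last N)) ∧
        ∃ bγ : ℝ → X, IsGeodesic z w₄ bγ ∧ geodImg z w₄ bγ ⊆ T) :
    ∀ q ∈ geodImg w₁ z η, infDist q T ≤ δ + 2 * Mdiam := by
  rcases hZ with hzV | ⟨m, hzm, w₄, ⟨hw₄U, hw₄V⟩, bγ, hbγ, hbT⟩
  · intro q hq
    have hqz : dist q z ≤ Mdiam := hη.short (distVl hM hdiam hw₁ hzV) q hq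
    exact le_trans (infDist_le_dist_of_mem hzT) (by linarith)
  · intro q hq
    have hR := lemR hδ hM hGeo hdiam hUV hUthin hmeet m z w₁ w₄
      (fun t => η (dist w₁ z - t)) bγ hzm hw₁ hw₄U hw₄V hη.rev hbγ
    have hq' : q ∈ geodImg z w₁ (fun t => η (dist w₁ z - t)) := by
      rw [hη.revImg]; exact hq
    calc infDist q T ≤ infDist q (geodImg z w₄ bγ) :=
          infDist_le_infDist_of_subset hbT hbγ.img_nonempty
      _ ≤ δ + 2 * Mdiam := hR q hq'

end Glue

section Glue2

variable {X : Type*} [MetricSpace X] {δ Mdiam : ℝ} {N : ℕ}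
  {V : Fin (N + 1) → Set X} {U : Fin N → Set X}

/-- Key side analysis: for a triangle `(v,u,z)` with sides `γ : v→u`, `τ : v→z`,
`π : u→z` and target `T` containing the images of `τ` and `π`, either the whole side
`γ` is `(3δ+2M)`-close to `T`, or there is a cut point on `γ` in `V_last` such that the
initial segment up to it is `(3δ+2M)`-close to `T`, together with an anchor of `T` in
`V_last`. -/
private lemma cutside (hδ : 0 ≤ δ) (hM : 0 ≤ Mdiam)
    (hGeo : ∀ a b : X, ∃ γ : ℝ → X, IsGeodesic a b γ)
    (hcover : (⋃ i, V i) = univ)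
    (hdiam : EMetric.diam (V (Fin.last N)) ≤ ENNReal.ofReal Mdiam)
    (hUV : ∀ i : Fin N, V i.castSucc ⊆ U i)
    (hUthin : ∀ i : Fin N, TrianglesThinOn (U i) δ)
    (hmeet : ∀ i : Fin N, ∀ x ∈ V i.castSucc, ∀ y ∉ U i, ∀ γ : ℝ → X,
      IsGeodesic x y γ → (geodImg x y γ ∩ (U i ∩ V (Fin.last N))).Nonempty)
    (v u z : X) (γ τ π : ℝ → X) (T : Set X)
    (hγ : IsGeodesic v u γ) (hτ : IsGeodesic v z τ) (hπ : IsGeodesic u z π)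
    (hτT : geodImg v z τ ⊆ T) (hπT : geodImg u z π ⊆ T) :
    (∀ p ∈ geodImg v u γ, infDist p T ≤ 3 * δ + 2 * Mdiam) ∨
    (∃ s₁, s₁ ∈ Icc (0:ℝ) (dist v u) ∧ γ s₁ ∈ V (Fin.last N) ∧
      (∃ w, w ∈ T ∧ w ∈ V (Fin.last N)) ∧
      ∀ t ∈ Icc (0:ℝ) s₁, infDist (γ t) T ≤ 3 * δ + 2 * Mdiam) := by
  have hzT : z ∈ T := hπT hπ.right_mem
  have thinLeft : ∀ m : Fin N, v ∈ U m → u ∈ U m → z ∈ U m →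
      ∀ p ∈ geodImg v u γ, infDist p T ≤ 3 * δ + 2 * Mdiam := by
    intro m hvm hum hzm p hp
    have thin := (hUthin m v hvm u hum z hzm γ π τ hγ hπ hτ).1 p hp
    have hmono : infDist p T ≤ infDist p (geodImg u z π ∪ geodImg v z τ) :=
      infDist_le_infDist_of_subset (union_subset hπT hτT)
        (hπ.img_nonempty.mono subset_union_left)
    linarith
  obtain ⟨j, hvj⟩ := mem_iUnion.mp (hcover ▸ mem_univ v)
  rcases Fin.eq_castSucc_or_eq_last j with ⟨i, rfl⟩ | rfl
  · -- v ∈ V i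
    have hvU : v ∈ U i := hUV i hvj
    by_cases hu : u ∈ U i
    · by_cases hz : z ∈ U i
      · exact Or.inl (thinLeft i hvU hu hz)
      · -- u ∈ U i, z ∉ U i : "RHO" configuration, bound all of γ
        obtain ⟨w₂, hw₂Img, hw₂U, hw₂V⟩ := hmeet i v hvj z hz τ hτ
        obtain ⟨r₂, hr₂, rfl⟩ := hw₂Img
        have hw₂T : τ r₂ ∈ T := hτT (mem_image_of_mem _ hr₂)
        obtain ⟨ρ, hρ⟩ := hGeo u (τ r₂)
        obtain ⟨k', huk'⟩ := mem_iUnion.mp (hcover ▸ mem_univ u)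
        have claim : (∀ p ∈ geodImg v u γ, infDist p T ≤ 3 * δ + 2 * Mdiam) ∨
            (∀ q ∈ geodImg u (τ r₂) ρ, infDist q T ≤ 2 * δ + 2 * Mdiam) := by
          rcases Fin.eq_castSucc_or_eq_last k' with ⟨k, rfl⟩ | rfl
          · -- u ∈ V k
            by_cases hzk : z ∈ U k
            · by_cases hvk : v ∈ U k
              · exact Or.inl (thinLeft k hvk (hUV k huk') hzk)
              · -- z ∈ U k, v ∉ U k : use zbase on z
                rcases zbase hcover hUV hmeet z u v (fun t => π (dist u z - t))
                    (fun t => τ (dist v z - t)) T hπ.rev hτ.rev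
                    (by rw [hπ.revImg]; exact hπT) (by rw [hτ.revImg]; exact hτT) with
                  ⟨m, hzm, hum, hvm⟩ | hZ
                · exact Or.inl (thinLeft m hvm hum hzm)
                · right
                  by_cases hw₂k : τ r₂ ∈ U k
                  · obtain ⟨η₂, hη₂⟩ := hGeo (τ r₂) z
                    intro q hq
                    have thin := (hUthin k u (hUV k huk') (τ r₂) hw₂k z hzk
                      ρ η₂ π hρ hη₂ hπ).1 q hq
                    have hETA := eta hδ hM hGeo hdiam hUV hUthin hmeet z (τ r₂) η₂ T
                      hw₂V hη₂ hzT hZ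
                    have := infDist_union_trans (by linarith) hπ.img_nonempty thin hETA hπT
                    linarith
                  · obtain ⟨w₅, hw₅Img, hw₅U, hw₅V⟩ := hmeet k u huk' (τ r₂) hw₂k ρ hρ
                    obtain ⟨s₅, hs₅, rfl⟩ := hw₅Img
                    rintro q ⟨t, ht, rfl⟩
                    by_cases htb : t ≤ s₅
                    · obtain ⟨η₅, hη₅⟩ := hGeo (ρ s₅) z
                      have hqmem : ρ t ∈ geodImg u (ρ s₅) ρ :=
                        mem_image_of_mem _ (by rw [hρ.distLeft hs₅]; exact ⟨ht.1, htb⟩)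
                      have thin := (hUthin k u (hUV k huk') (ρ s₅) hw₅U z hzk
                        ρ η₅ π (hρ.init hs₅) hη₅ hπ).1 (ρ t) hqmem
                      have hETA := eta hδ hM hGeo hdiam hUV hUthin hmeet z (ρ s₅) η₅ T
                        hw₅V hη₅ hzT hZ
                      have := infDist_union_trans (by linarith) hπ.img_nonempty thin hETA hπT
                      linarith
                    · have h2 : dist (ρ s₅) (τ r₂) ≤ Mdiam := distVl hM hdiam hw₅V hw₂V
                      have h3 : dist (ρ t) (τ r₂) = dist u (τ r₂) - t := hρ.distRight ht
                      have h4 : dist (ρ s₅) (τ r₂) = dist u (τ r₂) - s₅ := hρ.distRight hs₅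
                      exact le_trans (infDist_le_dist_of_mem hw₂T) (by linarith)
            · -- z ∉ U k : base on π via hmeet from u
              obtain ⟨w₄, hw₄Img, hw₄U, hw₄V⟩ := hmeet k u huk' z hzk π hπ
              obtain ⟨r₄, hr₄, rfl⟩ := hw₄Img
              right
              intro q hq
              have hR := lemR hδ hM hGeo hdiam hUV hUthin hmeet k u (τ r₂) (π r₄)
                ρ π huk' hw₂V hw₄U hw₄V hρ (hπ.init hr₄)
              calc infDist q T ≤ infDist q (geodImg u (π r₄) π) :=
                    infDist_le_infDist_of_subset ((hπ.initImg_subset hr₄).trans hπT)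
                      (hπ.init hr₄).img_nonempty
                _ ≤ δ + 2 * Mdiam := hR q hq
                _ ≤ 2 * δ + 2 * Mdiam := by linarith
          · -- u ∈ V_last
            right
            intro q hq
            have hq2 : dist q (τ r₂) ≤ Mdiam := hρ.short (distVl hM hdiam huk' hw₂V) q hq
            exact le_trans (infDist_le_dist_of_mem hw₂T) (by linarith)
        rcases claim with hL | hall
        · exact Or.inl hL
        · left
          intro p hp
          have thin := (hUthin i v hvU u hu (τ r₂) hw₂U γ ρ τ hγ hρ (hτ.init hr₂)).1 p hp
          have := infDist_union_trans (by linarith) (hτ.init hr₂).img_nonempty thin hall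
            ((hτ.initImg_subset hr₂).trans hτT)
          linarith
    · -- u ∉ U i : cut point on γ exists
      obtain ⟨w₁, hw₁Img, hw₁U, hw₁V⟩ := hmeet i v hvj u hu γ hγ
      obtain ⟨s₁, hs₁, rfl⟩ := hw₁Img
      by_cases hz : z ∈ U i
      · -- companion: z itself, control η via zbase/eta
        rcases zbase hcover hUV hmeet z u v (fun t => π (dist u z - t))
            (fun t => τ (dist v z - t)) T hπ.rev hτ.rev
            (by rw [hπ.revImg]; exact hπT) (by rw [hτ.revImg]; exact hτT) with
          ⟨m, hzm, hum, hvm⟩ | hZ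
        · exact Or.inl (thinLeft m hvm hum hzm)
        · right
          have anchor : ∃ w, w ∈ T ∧ w ∈ V (Fin.last N) := by
            rcases hZ with hzV | ⟨m, hzm, w₄, ⟨hw₄U, hw₄V⟩, bγ, hbγ, hbT⟩
            · exact ⟨z, hzT, hzV⟩
            · exact ⟨w₄, hbT hbγ.right_mem, hw₄V⟩
          refine ⟨s₁, hs₁, hw₁V, anchor, ?_⟩
          intro t ht
          obtain ⟨η, hη⟩ := hGeo (γ s₁) z
          have hqmem : γ t ∈ geodImg v (γ s₁) γ :=
            mem_image_of_mem _ (by rw [hγ.distLeft hs₁]; exact ht)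
          have thin := (hUthin i v hvU (γ s₁) hw₁U z hz γ η τ
            (hγ.init hs₁) hη hτ).1 (γ t) hqmem
          have hETA := eta hδ hM hGeo hdiam hUV hUthin hmeet z (γ s₁) η T
            hw₁V hη hzT hZ
          have := infDist_union_trans (by linarith) hτ.img_nonempty thin hETA hτT
          linarith
      · -- u ∉ U i, z ∉ U i : companion w₂ on τ
        obtain ⟨w₂, hw₂Img, hw₂U, hw₂V⟩ := hmeet i v hvj z hz τ hτ
        obtain ⟨r₂, hr₂, rfl⟩ := hw₂Img
        right
        refine ⟨s₁, hs₁, hw₁V, ⟨τ r₂, hτT (mem_image_of_mem _ hr₂), hw₂V⟩, ?_⟩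
        intro t ht
        obtain ⟨η, hη⟩ := hGeo (γ s₁) (τ r₂)
        have hqmem : γ t ∈ geodImg v (γ s₁) γ :=
          mem_image_of_mem _ (by rw [hγ.distLeft hs₁]; exact ht)
        have thin := (hUthin i v hvU (γ s₁) hw₁U (τ r₂) hw₂U γ η τ
          (hγ.init hs₁) hη (hτ.init hr₂)).1 (γ t) hqmem
        have hηT : ∀ r ∈ geodImg (γ s₁) (τ r₂) η, infDist r T ≤ Mdiam := by
          intro r hr
          have : dist r (τ r₂) ≤ Mdiam := hη.short (distVl hM hdiam hw₁V hw₂V) r hr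
          exact le_trans (infDist_le_dist_of_mem (hτT (mem_image_of_mem _ hr₂)))
            (by linarith)
        have := infDist_union_trans hM (hτ.init hr₂).img_nonempty thin hηT
          ((hτ.initImg_subset hr₂).trans hτT)
        linarith
  · -- v ∈ V_last : trivial cut at 0
    right
    refine ⟨0, ⟨le_rfl, dist_nonneg⟩, by rw [hγ.1]; exact hvj,
      ⟨v, hτT hτ.left_mem, hvj⟩, ?_⟩
    intro t ht
    have ht0 : t = 0 := le_antisymm ht.2 ht.1
    subst ht0
    rw [hγ.1]
    exact le_trans (infDist_le_dist_of_mem (hτT hτ.left_mem)) (by simp; linarith)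

end Glue2

section Glue3

variable {X : Type*} [MetricSpace X] {δ Mdiam : ℝ} {N : ℕ}
  {V : Fin (N + 1) → Set X} {U : Fin N → Set X}

/-- Global thinness of one side of an arbitrary geodesic triangle. -/
private lemma mainLemma (hδ : 0 ≤ δ) (hM : 0 ≤ Mdiam)
    (hGeo : ∀ a b : X, ∃ γ : ℝ → X, IsGeodesic a b γ)
    (hcover : (⋃ i, V i) = univ)
    (hdiam : EMetric.diam (V (Fin.last N)) ≤ ENNReal.ofReal Mdiam)
    (hUV : ∀ i : Fin N, V i.castSucc ⊆ U i)
    (hUthin : ∀ i : Fin N, TrianglesThinOn (U i) δ)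
    (hmeet : ∀ i : Fin N, ∀ x ∈ V i.castSucc, ∀ y ∉ U i, ∀ γ : ℝ → X,
      IsGeodesic x y γ → (geodImg x y γ ∩ (U i ∩ V (Fin.last N))).Nonempty)
    (a b c : X) (α β σ : ℝ → X)
    (hα : IsGeodesic a b α) (hβ : IsGeodesic b c β) (hσ : IsGeodesic a c σ) :
    ∀ p ∈ geodImg a b α, infDist p (geodImg b c β ∪ geodImg a c σ) ≤ 3 * δ + 2 * Mdiam := by
  set T := geodImg b c β ∪ geodImg a c σ with hT
  have h1 := cutside hδ hM hGeo hcover hdiam hUV hUthin hmeet a b c α σ β T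
    hα hσ hβ subset_union_right subset_union_left
  rcases h1 with hL | ⟨s₁, hs₁, hVl₁, anchor, bd₁⟩
  · exact hL
  have h2 := cutside hδ hM hGeo hcover hdiam hUV hUthin hmeet b a c
    (fun t => α (dist a b - t)) β σ T hα.rev hβ hσ subset_union_left subset_union_right
  rcases h2 with hL | ⟨s₂, hs₂, hVl₂, _, bd₂⟩
  · intro p hp
    exact hL p (by rw [hα.revImg]; exact hp)
  rintro p ⟨t, ht, rfl⟩
  have hs₂' : s₂ ∈ Icc (0:ℝ) (dist a b) := by rwa [dist_comm b a] at hs₂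
  by_cases h1t : t ≤ s₁
  · exact bd₁ t ⟨ht.1, h1t⟩
  by_cases h2t : dist a b - s₂ ≤ t
  · have hb2 := bd₂ (dist a b - t) ⟨by linarith [ht.2], by linarith⟩
    simp only [sub_sub_cancel] at hb2
    exact hb2
  · push_neg at h1t h2t
    obtain ⟨w, hwT, hwV⟩ := anchor
    have hw₂ : α (dist a b - s₂) ∈ V (Fin.last N) := hVl₂
    have hD2 : dist a b - s₂ ∈ Icc (0:ℝ) (dist a b) :=
      ⟨by linarith [hs₂'.2], by linarith [hs₂'.1]⟩
    have hdist1 : dist (α t) (α s₁) = |t - s₁| := hα.2.2 t ht s₁ hs₁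
    have hdist2 : dist (α s₁) (α (dist a b - s₂)) = |s₁ - (dist a b - s₂)| :=
      hα.2.2 s₁ hs₁ _ hD2
    have hVV : dist (α s₁) (α (dist a b - s₂)) ≤ Mdiam := distVl hM hdiam hVl₁ hw₂
    have hww : dist (α s₁) w ≤ Mdiam := distVl hM hdiam hVl₁ hwV
    have habs2 : |s₁ - (dist a b - s₂)| = dist a b - s₂ - s₁ := by
      rw [abs_sub_comm, abs_of_nonneg (by linarith)]
    have habs1 : |t - s₁| = t - s₁ := abs_of_nonneg (by linarith)
    have htri : dist (α t) w ≤ dist (α t) (α s₁) + dist (α s₁) w := dist_triangle _ _ _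
    have hfin : dist (α t) w ≤ 2 * Mdiam := by
      rw [hdist1, habs1] at htri
      rw [habs2] at hdist2
      linarith
    exact le_trans (infDist_le_dist_of_mem hwT) (by linarith)

/-- Gromov product is a lower bound for the distance to a geodesic. -/
private lemma gp_le_infDist (o x y : X) (γ : ℝ → X) (hγ : IsGeodesic x y γ) :
    gromovProd o x y ≤ infDist o (geodImg x y γ) := by
  refine le_infDist' hγ.img_nonempty ?_
  rintro p ⟨t, ht, rfl⟩
  have h1 : dist x (γ t) = t := hγ.distLeft ht
  have h2 : dist (γ t) y = dist x y - t := hγ.distRight ht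
  have h3 : dist x o ≤ dist x (γ t) + dist (γ t) o := dist_triangle _ _ _
  have h4 : dist y o ≤ dist y (γ t) + dist (γ t) o := dist_triangle _ _ _
  have h5 : dist y (γ t) = dist (γ t) y := dist_comm _ _
  have h6 : dist o (γ t) = dist (γ t) o := dist_comm _ _
  unfold gromovProd
  linarith

/-- In a space with `Δ`-thin triangles, the distance to a geodesic is at most the
Gromov product plus `2Δ`. -/
private lemma infDist_le_gp {Δ : ℝ} (hΔ : 0 ≤ Δ)
    (hthin : TrianglesThinOn (univ : Set X) Δ)
    (hGeo : ∀ a b : X, ∃ γ : ℝ → X, IsGeodesic a b γ)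
    (o x y : X) (γ : ℝ → X) (hγ : IsGeodesic x y γ) :
    infDist o (geodImg x y γ) ≤ gromovProd o x y + 2 * Δ := by
  obtain ⟨α, hα⟩ := hGeo x o
  obtain ⟨β, hβ⟩ := hGeo y o
  set D := dist x y with hD
  set A := {t | t ∈ Icc (0:ℝ) D ∧ infDist (γ t) (geodImg x o α) ≤ Δ} with hA
  have h0A : (0:ℝ) ∈ A := by
    refine ⟨⟨le_rfl, dist_nonneg⟩, ?_⟩
    rw [hγ.1, infDist_zero_of_mem hα.left_mem]
    exact hΔ
  have hAne : A.Nonempty := ⟨0, h0A⟩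
  have hAbdd : BddAbove A := ⟨D, fun t ht => ht.1.2⟩
  set t₀ := sSup A with ht₀
  have ht₀mem : t₀ ∈ Icc (0:ℝ) D :=
    ⟨le_csSup hAbdd h0A, csSup_le hAne fun t ht => ht.1.2⟩
  have h1 : infDist (γ t₀) (geodImg x o α) ≤ Δ := by
    refine le_add_eps fun ε hε => ?_
    obtain ⟨t, htA, htgt⟩ : ∃ t ∈ A, t₀ - ε < t := by
      by_contra hcon
      push_neg at hcon
      have : t₀ ≤ t₀ - ε := csSup_le hAne fun t ht => hcon t ht
      linarith
    have hle : t ≤ t₀ := le_csSup hAbdd htA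
    have hd : dist (γ t₀) (γ t) = |t₀ - t| := hγ.2.2 t₀ ht₀mem t htA.1
    calc infDist (γ t₀) (geodImg x o α)
        ≤ infDist (γ t) (geodImg x o α) + dist (γ t₀) (γ t) := infDist_le_infDist_add_dist
      _ ≤ Δ + ε := by
          rw [hd, abs_of_nonneg (by linarith)]
          linarith [htA.2]
  have h2 : ∀ ε > (0:ℝ), ∃ q ∈ geodImg y o β, dist (γ t₀) q ≤ Δ + ε := by
    intro ε hε
    by_cases hEnd : t₀ = D
    · refine ⟨y, hβ.left_mem, ?_⟩
      rw [hEnd, hγ.2.1]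
      simp
      linarith
    · have ht₀D : t₀ < D := lt_of_le_of_ne ht₀mem.2 hEnd
      set t := min D (t₀ + ε / 2) with htdef
      have htIcc : t ∈ Icc (0:ℝ) D := ⟨le_min (ht₀mem.1.trans ht₀mem.2) (by linarith [ht₀mem.1]), min_le_left _ _⟩
      have htgt : t₀ < t := lt_min ht₀D (by linarith)
      have htnA : t ∉ A := fun hmem => absurd (le_csSup hAbdd hmem) (not_le.2 htgt)
      have hfar : Δ < infDist (γ t) (geodImg x o α) := by
        by_contra hcon
        push_neg at hcon
        exact htnA ⟨htIcc, hcon⟩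
      have thin := (hthin x (mem_univ _) y (mem_univ _) o (mem_univ _) γ β α
        hγ hβ hα).1 (γ t) (mem_image_of_mem _ htIcc)
      set ε₂ := min (ε / 2) ((infDist (γ t) (geodImg x o α) - Δ) / 2) with hε₂def
      have hε₂ : 0 < ε₂ := lt_min (by linarith) (by linarith)
      obtain ⟨q, hq, hdq⟩ := (infDist_lt_iff ⟨y, Or.inl hβ.left_mem⟩).mp
        (lt_of_le_of_lt thin (by linarith : Δ < Δ + ε₂))
      have hqβ : q ∈ geodImg y o β := by
        rcases hq with hq | hq
        · exact hq
        · exfalso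
          have hle1 : infDist (γ t) (geodImg x o α) ≤ dist (γ t) q :=
            infDist_le_dist_of_mem hq
          have hle2 : ε₂ ≤ (infDist (γ t) (geodImg x o α) - Δ) / 2 := min_le_right _ _
          linarith
      refine ⟨q, hqβ, ?_⟩
      have hdt : dist (γ t₀) (γ t) = t - t₀ := by
        rw [hγ.2.2 t₀ ht₀mem t htIcc, abs_sub_comm, abs_of_nonneg (by linarith)]
      have htle : t - t₀ ≤ ε / 2 := by
        have := min_le_right D (t₀ + ε / 2)
        linarith
      have hε₂le : ε₂ ≤ ε / 2 := min_le_left _ _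
      calc dist (γ t₀) q ≤ dist (γ t₀) (γ t) + dist (γ t) q := dist_triangle _ _ _
        _ ≤ Δ + ε := by rw [hdt]; linarith
  refine le_add_eps fun ε hε => ?_
  obtain ⟨q₁, hq₁, hd₁⟩ := (infDist_lt_iff hα.img_nonempty).mp
    (lt_of_le_of_lt h1 (by linarith : Δ < Δ + ε / 4))
  obtain ⟨q₂, hq₂, hd₂⟩ := h2 (ε / 4) (by linarith)
  obtain ⟨r₁, hr₁, rfl⟩ := hq₁
  obtain ⟨r₂, hr₂, rfl⟩ := hq₂
  have e1 : dist x (α r₁) = r₁ := hα.distLeft hr₁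
  have e2 : dist (α r₁) o = dist x o - r₁ := hα.distRight hr₁
  have e3 : dist y (β r₂) = r₂ := hβ.distLeft hr₂
  have e4 : dist (β r₂) o = dist y o - r₂ := hβ.distRight hr₂
  have f1 : dist x (γ t₀) = t₀ := hγ.distLeft ht₀mem
  have f2 : dist (γ t₀) y = D - t₀ := hγ.distRight ht₀mem
  have tri1 : dist x (γ t₀) ≤ dist x (α r₁) + dist (α r₁) (γ t₀) := dist_triangle _ _ _
  have tri2 : dist (γ t₀) y ≤ dist (γ t₀) (β r₂) + dist (β r₂) y := dist_triangle _ _ _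
  have tri3 : dist o (γ t₀) ≤ dist o (α r₁) + dist (α r₁) (γ t₀) := dist_triangle _ _ _
  have tri4 : dist o (γ t₀) ≤ dist o (β r₂) + dist (β r₂) (γ t₀) := dist_triangle _ _ _
  have c1 : dist (α r₁) (γ t₀) = dist (γ t₀) (α r₁) := dist_comm _ _
  have c2 : dist (β r₂) (γ t₀) = dist (γ t₀) (β r₂) := dist_comm _ _
  have c3 : dist o (α r₁) = dist (α r₁) o := dist_comm _ _
  have c4 : dist o (β r₂) = dist (β r₂) o := dist_comm _ _
  have c5 : dist (β r₂) y = dist y (β r₂) := dist_comm _ _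
  have final : infDist o (geodImg x y γ) ≤ dist o (γ t₀) :=
    infDist_le_dist_of_mem (mem_image_of_mem _ ht₀mem)
  unfold gromovProd
  linarith

end Glue3

/-- local-to-global gluing of thinness.  `X` is covered by `V 0, …, V N`
(`V (Fin.last N)` playing the role of `V_{N+1}`), each locally hyperbolic; the last
piece has diameter at most `M`; for `i < N` there is an open `U i ⊇ V i` such that
geodesics leaving `U i` from `V i` meet `U i ∩ V (Fin.last N)` and triangles with
vertices in `U i` are `δ`-thin.  Then all geodesic triangles in `X` are
`(3δ + 2M)`-thin, and `X` is Gromov hyperbolic. -/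
theorem stmt_18 {X : Type*} [MetricSpace X] (δ Mdiam : ℝ) (hδ : 0 ≤ δ)
    (hM : 0 ≤ Mdiam)
    (hGeo : ∀ a b : X, ∃ γ : ℝ → X, IsGeodesic a b γ)
    (N : ℕ) (V : Fin (N + 1) → Set X) (U : Fin N → Set X)
    (hcover : (⋃ i, V i) = univ)
    (hlocal : ∀ i, TrianglesThinOn (V i) δ)
    (hdiam : EMetric.diam (V (Fin.last N)) ≤ ENNReal.ofReal Mdiam)
    (hUopen : ∀ i, IsOpen (U i))
    (hUV : ∀ i : Fin N, V i.castSucc ⊆ U i)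
    (hUthin : ∀ i : Fin N, TrianglesThinOn (U i) δ)
    (hmeet : ∀ i : Fin N, ∀ x ∈ V i.castSucc, ∀ y ∉ U i, ∀ γ : ℝ → X,
      IsGeodesic x y γ → (geodImg x y γ ∩ (U i ∩ V (Fin.last N))).Nonempty) :
    TrianglesThinOn (univ : Set X) (3 * δ + 2 * Mdiam) ∧
      ∃ δ' ≥ (0 : ℝ), ∀ o x y z : X,
        gromovProd o x y ≥ min (gromovProd o x z) (gromovProd o z y) - δ' := by
  have hΔ0 : (0:ℝ) ≤ 3 * δ + 2 * Mdiam := by linarith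
  have hthin : TrianglesThinOn (univ : Set X) (3 * δ + 2 * Mdiam) := by
    intro x _ y _ z _ γ₁ γ₂ γ₃ h₁ h₂ h₃
    refine ⟨?_, ?_, ?_⟩
    · exact mainLemma hδ hM hGeo hcover hdiam hUV hUthin hmeet x y z γ₁ γ₂ γ₃ h₁ h₂ h₃
    · intro p hp
      have hm := mainLemma hδ hM hGeo hcover hdiam hUV hUthin hmeet y z x γ₂
        (fun t => γ₃ (dist x z - t)) (fun t => γ₁ (dist x y - t)) h₂ h₃.rev h₁.rev p hp
      rw [h₃.revImg, h₁.revImg, union_comm] at hm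
      exact hm
    · intro p hp
      have hm := mainLemma hδ hM hGeo hcover hdiam hUV hUthin hmeet x z y γ₃
        (fun t => γ₂ (dist y z - t)) γ₁ h₃ h₂.rev h₁ p hp
      rw [h₂.revImg, union_comm] at hm
      exact hm
  refine ⟨hthin, 3 * (3 * δ + 2 * Mdiam), by linarith, ?_⟩
  intro o x y z
  obtain ⟨g1, hg1⟩ := hGeo x y
  obtain ⟨g2, hg2⟩ := hGeo y z
  obtain ⟨g3, hg3⟩ := hGeo x z
  have hA : infDist o (geodImg x y g1) ≤ gromovProd o x y + 2 * (3 * δ + 2 * Mdiam) :=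
    infDist_le_gp hΔ0 hthin hGeo o x y g1 hg1
  have hmin : min (gromovProd o x z) (gromovProd o z y)
      ≤ infDist o (geodImg x y g1) + (3 * δ + 2 * Mdiam) := by
    refine le_add_eps fun ε hε => ?_
    obtain ⟨p, hp, hdp⟩ := (infDist_lt_iff hg1.img_nonempty).mp
      (by linarith [infDist_nonneg (s := geodImg x y g1) (x := o)] :
        infDist o (geodImg x y g1) < infDist o (geodImg x y g1) + ε / 2)
    have thin := (hthin x (mem_univ _) y (mem_univ _) z (mem_univ _)
      g1 g2 g3 hg1 hg2 hg3).1 p hp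
    obtain ⟨q, hq, hdq⟩ := (infDist_lt_iff ⟨y, Or.inl hg2.left_mem⟩).mp
      (lt_of_le_of_lt thin (by linarith : 3 * δ + 2 * Mdiam < 3 * δ + 2 * Mdiam + ε / 2))
    have tri : dist o q ≤ dist o p + dist p q := dist_triangle _ _ _
    rcases hq with hq | hq
    · have hgp : gromovProd o y z ≤ infDist o (geodImg y z g2) :=
        gp_le_infDist o y z g2 hg2
      have hgd : infDist o (geodImg y z g2) ≤ dist o q := infDist_le_dist_of_mem hq
      have hsym : gromovProd o z y = gromovProd o y z := by
        unfold gromovProd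
        rw [dist_comm z y]
        ring
      have hmle : min (gromovProd o x z) (gromovProd o z y) ≤ gromovProd o z y :=
        min_le_right _ _
      have hgp2 : gromovProd o z y ≤ dist o q := by rw [hsym]; linarith
      linarith
    · have hgp : gromovProd o x z ≤ infDist o (geodImg x z g3) :=
        gp_le_infDist o x z g3 hg3
      have hgd : infDist o (geodImg x z g3) ≤ dist o q := infDist_le_dist_of_mem hq
      have hmle : min (gromovProd o x z) (gromovProd o z y) ≤ gromovProd o x z :=
        min_le_left _ _
      linarith
  rw [ge_iff_le]
  linarith
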